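/- Let S = (X, ≺, ⊏) be a so-structure on a finite set X, let Θ_S = (X, sim_S, ser_S) (which is a comtrace alphabet), and let ⊲ ∈ ext(S). Then: (1) { Ω_⊲' | ⊲' ∈ ext(S) } = [Ω_⊲], the comtrace congruence class of Ω_⊲ over Θ_S; (2) (X, ⋂_{x ∈ [Ω_⊲]} ⊲_x, ⋂_{x ∈ [Ω_⊲]} (⊲_x)⌢) = (X, ≺, ⊏). -/

import Mathlib

/-- A stratified order on `X`: an irreflexive, transitive relation such that the
relation `a ≃ b ↔ a = b ∨ (¬ r a b ∧ ¬ r b a)` is transitive. -/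
def IsStratOrder {X : Type*} (r : X → X → Prop) : Prop :=
  (∀ a, ¬ r a a) ∧ (∀ a b c, r a b → r b c → r a c) ∧
  (∀ a b c, (a = b ∨ (¬ r a b ∧ ¬ r b a)) → (b = c ∨ (¬ r b c ∧ ¬ r c b)) →
    (a = c ∨ (¬ r a c ∧ ¬ r c a)))

/-- A stratified order structure `(X, ≺, ⊏)`: axioms S1–S4. -/
def IsSOStruct {X : Type*} (prec sub : X → X → Prop) : Prop :=
  (∀ a, ¬ sub a a) ∧
  (∀ a b, prec a b → sub a b) ∧
  (∀ a b c, sub a b → sub b c → a ≠ c → sub a c) ∧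
  (∀ a b c, (sub a b ∧ prec b c) ∨ (prec a b ∧ sub b c) → prec a c)

/-- A stratified extension of a so-structure `(X, prec, sub)`: a stratified order `r`
with `prec ⊆ r` and `sub ⊆ r⌢`. -/
def IsStratExt {X : Type*} (prec sub r : X → X → Prop) : Prop :=
  IsStratOrder r ∧ (∀ a b, prec a b → r a b) ∧ (∀ a b, sub a b → a ≠ b ∧ ¬ r b a)

/-- The simultaneity relation of a so-structure. -/
def simS {X : Type*} (prec : X → X → Prop) (a b : X) : Prop :=
  a ≠ b ∧ ¬ prec a b ∧ ¬ prec b a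

/-- The serializability relation of a so-structure. -/
def serS {X : Type*} (prec sub : X → X → Prop) (a b : X) : Prop :=
  simS prec a b ∧ ¬ sub b a

variable {E : Type*}

/-- A step over a comtrace alphabet `(E, sim, ser)`: a nonempty finite set of events,
pairwise related by `sim`. -/
def IsStep [DecidableEq E] (sim : E → E → Prop) (A : Finset E) : Prop :=
  A.Nonempty ∧ ∀ a ∈ A, ∀ b ∈ A, a ≠ b → sim a b

/-- A step sequence: a finite list of steps. -/
def IsStepSeq [DecidableEq E] (sim : E → E → Prop) (u : List (Finset E)) : Prop :=
  ∀ A ∈ u, IsStep sim A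

/-- The generating relation of comtrace congruence:
`w·A·z ≈ w·B·C·z` whenever `A`, `B`, `C` are steps with `B ∪ C = A` and `B × C ⊆ ser`. -/
def CTBase [DecidableEq E] (sim ser : E → E → Prop) (u v : List (Finset E)) : Prop :=
  ∃ (w z : List (Finset E)) (A B C : Finset E),
    IsStepSeq sim w ∧ IsStepSeq sim z ∧
    IsStep sim A ∧ IsStep sim B ∧ IsStep sim C ∧
    B ∪ C = A ∧ (∀ b ∈ B, ∀ c ∈ C, ser b c) ∧
    u = w ++ A :: z ∧ v = w ++ B :: C :: z

/-- The least equivalence relation containing `base`. -/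
def LeastEquiv {α : Type*} (base : α → α → Prop) (x y : α) : Prop :=
  ∀ c : α → α → Prop, Equivalence c → (∀ a b, base a b → c a b) → c x y

/-- Comtrace congruence: the least equivalence relation containing `CTBase`. -/
def CTEquiv [DecidableEq E] (sim ser : E → E → Prop) :
    List (Finset E) → List (Finset E) → Prop :=
  LeastEquiv (CTBase sim ser)

/-- `posFirst x a`: the index of the first step of `x` containing `a`. -/
def posFirst {X : Type*} [DecidableEq X] (x : List (Finset X)) (a : X) : ℕ :=
  x.findIdx (fun A => decide (a ∈ A))

/-- `IsOmega r u`: `u` is the step sequence representing the stratified order `r`: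
its steps are the equivalence classes of `≃_r`, each element occurs in exactly one
step, and `r a b` holds iff `a` occurs in an earlier step than `b`. -/
def IsOmega {X : Type*} [DecidableEq X] (r : X → X → Prop)
    (u : List (Finset X)) : Prop :=
  (∀ a : X, ∃! i : Fin u.length, a ∈ u.get i) ∧
  (∀ B ∈ u, ∃ a : X, ∀ x : X, x ∈ B ↔ (x = a ∨ (¬ r x a ∧ ¬ r a x))) ∧
  (∀ a b : X, r a b ↔
    ∃ i j : Fin u.length, (i : ℕ) < (j : ℕ) ∧ a ∈ u.get i ∧ b ∈ u.get j)


section Basic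
variable {E : Type*} [DecidableEq E] {sim ser : E → E → Prop}

theorem ctequiv_refl (u : List (Finset E)) : CTEquiv sim ser u u :=
  fun _ hc _ => hc.refl u

theorem ctequiv_symm {u v : List (Finset E)} (h : CTEquiv sim ser u v) :
    CTEquiv sim ser v u := fun c hc hb => hc.symm (h c hc hb)

theorem ctequiv_trans {u v w : List (Finset E)} (h1 : CTEquiv sim ser u v)
    (h2 : CTEquiv sim ser v w) : CTEquiv sim ser u w :=
  fun c hc hb => hc.trans (h1 c hc hb) (h2 c hc hb)

theorem ctequiv_equivalence : Equivalence (CTEquiv (E := E) sim ser) :=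
  ⟨ctequiv_refl, ctequiv_symm, ctequiv_trans⟩

theorem ctbase_ctequiv {u v : List (Finset E)} (h : CTBase sim ser u v) :
    CTEquiv sim ser u v := fun _ _ hb => hb _ _ h

theorem ctequiv_cons {u v : List (Finset E)} {B : Finset E} (hB : IsStep sim B)
    (h : CTEquiv sim ser u v) : CTEquiv sim ser (B :: u) (B :: v) := by
  refine h (fun x y => CTEquiv sim ser (B :: x) (B :: y))
    ⟨fun x => ctequiv_refl _, fun h => ctequiv_symm h, fun h1 h2 => ctequiv_trans h1 h2⟩ ?_
  rintro a b ⟨w, z, A, B', C, hw, hz, hA, hB', hC, hun, hser, rfl, rfl⟩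
  exact ctbase_ctequiv ⟨B :: w, z, A, B', C,
    by intro D hD
       rcases List.mem_cons.mp hD with h1 | h1
       · exact h1 ▸ hB
       · exact hw D h1,
    hz, hA, hB', hC, hun, hser, rfl, rfl⟩

/-- `CTEquiv` preserves any `CTBase`-invariant property. -/
theorem ctequiv_iff {P : List (Finset E) → Prop}
    (hP : ∀ u v, CTBase sim ser u v → (P u ↔ P v)) {u v : List (Finset E)}
    (h : CTEquiv sim ser u v) : P u ↔ P v :=
  h (fun x y => (P x ↔ P y))
    ⟨fun _ => Iff.rfl, fun h => h.symm, fun h1 h2 => h1.trans h2⟩ hP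

/-- split at the head -/
theorem ctequiv_split {z : List (Finset E)} {B C : Finset E}
    (hz : IsStepSeq sim z) (hB : IsStep sim B) (hC : IsStep sim C)
    (hBC : IsStep sim (B ∪ C)) (hser : ∀ b ∈ B, ∀ c ∈ C, ser b c) :
    CTEquiv sim ser ((B ∪ C) :: z) (B :: C :: z) :=
  ctbase_ctequiv ⟨[], z, B ∪ C, B, C, by intro D hD; simp at hD, hz, hBC, hB, hC,
    rfl, hser, rfl, rfl⟩

/-- swap at the head -/
theorem ctequiv_swap {z : List (Finset E)} {B C : Finset E}
    (hz : IsStepSeq sim z) (hB : IsStep sim B) (hC : IsStep sim C)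
    (hBC : IsStep sim (B ∪ C)) (hser1 : ∀ b ∈ B, ∀ c ∈ C, ser b c)
    (hser2 : ∀ c ∈ C, ∀ b ∈ B, ser c b) :
    CTEquiv sim ser (B :: C :: z) (C :: B :: z) :=
  ctequiv_trans (ctequiv_symm (ctequiv_split hz hB hC hBC hser1)) (by
    rw [Finset.union_comm]
    exact ctequiv_split hz hC hB (by rwa [Finset.union_comm] at hBC) hser2)

end Basic

section GoodDef
variable {X : Type*} [DecidableEq X] (prec sub : X → X → Prop)

/-- `Good Y u`: `u` is a step-sequence realization over `Y` of the so-structure. -/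
def Good (Y : Finset X) (u : List (Finset X)) : Prop :=
  (∀ B ∈ u, B.Nonempty) ∧ (∀ B ∈ u, ∀ a ∈ B, a ∈ Y) ∧
  (∀ a ∈ Y, u.countP (fun A => decide (a ∈ A)) = 1) ∧
  (∀ a ∈ Y, ∀ b ∈ Y, prec a b → posFirst u a < posFirst u b) ∧
  (∀ a ∈ Y, ∀ b ∈ Y, sub a b → posFirst u a ≤ posFirst u b)

variable {prec sub}

theorem countP_cons_mem {D : Finset X} {t : List (Finset X)} {a : X} (h : a ∈ D) :
    (D :: t).countP (fun A => decide (a ∈ A)) = t.countP (fun A => decide (a ∈ A)) + 1 := by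
  rw [List.countP_cons]
  simp [h]

theorem countP_cons_not_mem {D : Finset X} {t : List (Finset X)} {a : X} (h : a ∉ D) :
    (D :: t).countP (fun A => decide (a ∈ A)) = t.countP (fun A => decide (a ∈ A)) := by
  rw [List.countP_cons]
  simp [h]

theorem countP_pos_of_mem {B : Finset X} {u : List (Finset X)} {a : X}
    (hB : B ∈ u) (ha : a ∈ B) : 0 < u.countP (fun A => decide (a ∈ A)) :=
  List.countP_pos_iff.mpr ⟨B, hB, by simpa using ha⟩

theorem posFirst_cons_mem {A : Finset X} {w : List (Finset X)} {a : X} (h : a ∈ A) :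
    posFirst (A :: w) a = 0 := by
  simp [posFirst, List.findIdx_cons, h]

theorem posFirst_cons_not_mem {A : Finset X} {w : List (Finset X)} {a : X} (h : a ∉ A) :
    posFirst (A :: w) a = posFirst w a + 1 := by
  simp [posFirst, List.findIdx_cons, h]

theorem mem_of_posFirst_eq_zero {A : Finset X} {w : List (Finset X)} {a : X}
    (h : posFirst (A :: w) a = 0) : a ∈ A := by
  by_contra hn
  rw [posFirst_cons_not_mem hn] at h
  omega

theorem good_tail {Y : Finset X} {A : Finset X} {w : List (Finset X)}
    (hG : Good prec sub Y (A :: w)) : Good prec sub (Y \ A) w := by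
  obtain ⟨g1, g2, g3, g4, g5⟩ := hG
  have hsub : ∀ B ∈ w, ∀ x ∈ B, x ∈ Y \ A := by
    intro B hBw x hxB
    have hxY : x ∈ Y := g2 B (List.mem_cons_of_mem _ hBw) x hxB
    rw [Finset.mem_sdiff]
    refine ⟨hxY, fun hxA => ?_⟩
    have h1 := g3 x hxY
    rw [countP_cons_mem hxA] at h1
    have h2 : 0 < w.countP (fun A => decide (x ∈ A)) := countP_pos_of_mem hBw hxB
    omega
  refine ⟨fun B hB => g1 B (List.mem_cons_of_mem _ hB), hsub, ?_, ?_, ?_⟩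
  · intro a ha
    rw [Finset.mem_sdiff] at ha
    have h1 := g3 a ha.1
    rwa [countP_cons_not_mem ha.2] at h1
  · intro a ha b hb hp
    rw [Finset.mem_sdiff] at ha hb
    have := g4 a ha.1 b hb.1 hp
    rw [posFirst_cons_not_mem ha.2, posFirst_cons_not_mem hb.2] at this
    omega
  · intro a ha b hb hp
    rw [Finset.mem_sdiff] at ha hb
    have := g5 a ha.1 b hb.1 hp
    rw [posFirst_cons_not_mem ha.2, posFirst_cons_not_mem hb.2] at this
    omega

theorem posFirst_eq_of_mem_mem {u : List (Finset X)} {A : Finset X} {a b : X}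
    (hA : A ∈ u) (ha : a ∈ A) (hb : b ∈ A)
    (h1 : u.countP (fun D => decide (a ∈ D)) = 1)
    (h2 : u.countP (fun D => decide (b ∈ D)) = 1) :
    posFirst u a = posFirst u b := by
  induction u with
  | nil => simp at hA
  | cons D t ih =>
    rcases List.mem_cons.mp hA with rfl | hAt
    · rw [posFirst_cons_mem ha, posFirst_cons_mem hb]
    · have haD : a ∉ D := by
        intro haD
        have h3 : 0 < t.countP (fun D => decide (a ∈ D)) := countP_pos_of_mem hAt ha
        rw [countP_cons_mem haD] at h1
        omega
      have hbD : b ∉ D := by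
        intro hbD
        have h3 : 0 < t.countP (fun D => decide (b ∈ D)) := countP_pos_of_mem hAt hb
        rw [countP_cons_mem hbD] at h2
        omega
      rw [posFirst_cons_not_mem haD, posFirst_cons_not_mem hbD]
      rw [countP_cons_not_mem haD] at h1
      rw [countP_cons_not_mem hbD] at h2
      rw [ih hAt h1 h2]

theorem good_isStepSeq {Y : Finset X} {u : List (Finset X)} (hG : Good prec sub Y u) :
    IsStepSeq (simS prec) u := by
  obtain ⟨g1, g2, g3, g4, g5⟩ := hG
  intro A hA
  refine ⟨g1 A hA, fun a ha b hb hne => ?_⟩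
  have haY := g2 A hA a ha
  have hbY := g2 A hA b hb
  have hpos : posFirst u a = posFirst u b :=
    posFirst_eq_of_mem_mem hA ha hb (g3 a haY) (g3 b hbY)
  exact ⟨hne, fun hp => by have := g4 a haY b hbY hp; omega,
    fun hp => by have := g4 b hbY a haY hp; omega⟩

end GoodDef

section Invariance
variable {X : Type*} [DecidableEq X] {prec sub : X → X → Prop}

theorem posFirst_append (w t : List (Finset X)) (a : X) :
    posFirst (w ++ t) a =
      if posFirst w a < w.length then posFirst w a else posFirst t a + w.length :=
  List.findIdx_append

theorem good_base {Y : Finset X} {u v : List (Finset X)}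
    (h : CTBase (simS prec) (serS prec sub) u v) :
    Good prec sub Y u ↔ Good prec sub Y v := by
  obtain ⟨w, z, A, B, C, hw, hz, hA, hB, hC, hun, hser, rfl, rfl⟩ := h
  have hd : ∀ x ∈ B, x ∉ C := fun x hb hc => (hser x hb x hc).1.1 rfl
  have hmemA : ∀ x : X, x ∈ A ↔ x ∈ B ∨ x ∈ C := by
    intro x
    rw [← hun, Finset.mem_union]
  have key : ∀ a : X,
      (posFirst (w ++ A :: z) a < w.length ∧
        posFirst (w ++ B :: C :: z) a = posFirst (w ++ A :: z) a) ∨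
      (posFirst (w ++ A :: z) a = w.length ∧ a ∈ B ∧
        posFirst (w ++ B :: C :: z) a = w.length) ∨
      (posFirst (w ++ A :: z) a = w.length ∧ a ∈ C ∧ a ∉ B ∧
        posFirst (w ++ B :: C :: z) a = w.length + 1) ∨
      (w.length < posFirst (w ++ A :: z) a ∧
        posFirst (w ++ B :: C :: z) a = posFirst (w ++ A :: z) a + 1) := by
    intro a
    rw [posFirst_append, posFirst_append]
    by_cases hw' : posFirst w a < w.length
    · rw [if_pos hw', if_pos hw']
      exact Or.inl ⟨hw', rfl⟩
    · rw [if_neg hw', if_neg hw']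
      by_cases haB : a ∈ B
      · have haA : a ∈ A := (hmemA a).mpr (Or.inl haB)
        rw [posFirst_cons_mem haA, posFirst_cons_mem haB]
        exact Or.inr (Or.inl ⟨by omega, haB, by omega⟩)
      · by_cases haC : a ∈ C
        · have haA : a ∈ A := (hmemA a).mpr (Or.inr haC)
          rw [posFirst_cons_mem haA, posFirst_cons_not_mem haB, posFirst_cons_mem haC]
          exact Or.inr (Or.inr (Or.inl ⟨by omega, haC, haB, by omega⟩))
        · have haA : a ∉ A := fun hh => ((hmemA a).mp hh).elim haB haC
          rw [posFirst_cons_not_mem haA, posFirst_cons_not_mem haB,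
            posFirst_cons_not_mem haC]
          exact Or.inr (Or.inr (Or.inr ⟨by omega, by omega⟩))
  have hcnt : ∀ a : X, (w ++ A :: z).countP (fun D => decide (a ∈ D)) =
      (w ++ B :: C :: z).countP (fun D => decide (a ∈ D)) := by
    intro a
    rw [List.countP_append, List.countP_append]
    congr 1
    by_cases haB : a ∈ B
    · have haA := (hmemA a).mpr (Or.inl haB)
      rw [countP_cons_mem haA, countP_cons_mem haB, countP_cons_not_mem (hd a haB)]
    · by_cases haC : a ∈ C
      · have haA := (hmemA a).mpr (Or.inr haC)
        rw [countP_cons_mem haA, countP_cons_not_mem haB, countP_cons_mem haC]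
      · have haA : a ∉ A := fun hh => ((hmemA a).mp hh).elim haB haC
        rw [countP_cons_not_mem haA, countP_cons_not_mem haB, countP_cons_not_mem haC]
  constructor
  · rintro ⟨g1, g2, g3, g4, g5⟩
    have hAmem : A ∈ w ++ A :: z := List.mem_append_right _ (List.mem_cons_self)
    refine ⟨?_, ?_, ?_, ?_, ?_⟩
    · intro D hD
      rcases List.mem_append.mp hD with hh | hh
      · exact g1 D (List.mem_append_left _ hh)
      · rcases List.mem_cons.mp hh with rfl | hh
        · exact hB.1
        · rcases List.mem_cons.mp hh with rfl | hh
          · exact hC.1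
          · exact g1 D (List.mem_append_right _ (List.mem_cons_of_mem _ hh))
    · intro D hD x hx
      rcases List.mem_append.mp hD with hh | hh
      · exact g2 D (List.mem_append_left _ hh) x hx
      · rcases List.mem_cons.mp hh with rfl | hh
        · exact g2 A hAmem x ((hmemA x).mpr (Or.inl hx))
        · rcases List.mem_cons.mp hh with rfl | hh
          · exact g2 A hAmem x ((hmemA x).mpr (Or.inr hx))
          · exact g2 D (List.mem_append_right _ (List.mem_cons_of_mem _ hh)) x hx
    · intro a ha
      rw [← hcnt a]
      exact g3 a ha
    · intro a ha b hb hp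
      have := g4 a ha b hb hp
      rcases key a with ⟨h1,h2⟩|⟨h1,h2,h3⟩|⟨h1,h2,h3,h4⟩|⟨h1,h2⟩ <;>
        rcases key b with ⟨j1,j2⟩|⟨j1,j2,j3⟩|⟨j1,j2,j3,j4⟩|⟨j1,j2⟩ <;> omega
    · intro a ha b hb hp
      have := g5 a ha b hb hp
      rcases key a with ⟨h1,h2⟩|⟨h1,h2,h3⟩|⟨h1,h2,h3,h4⟩|⟨h1,h2⟩ <;>
        rcases key b with ⟨j1,j2⟩|⟨j1,j2,j3⟩|⟨j1,j2,j3,j4⟩|⟨j1,j2⟩ <;>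
        first
          | omega
          | exact absurd hp (hser b j2 a h2).2
  · rintro ⟨g1, g2, g3, g4, g5⟩
    have hBmem : B ∈ w ++ B :: C :: z := List.mem_append_right _ (List.mem_cons_self)
    have hCmem : C ∈ w ++ B :: C :: z :=
      List.mem_append_right _ (List.mem_cons_of_mem _ (List.mem_cons_self))
    refine ⟨?_, ?_, ?_, ?_, ?_⟩
    · intro D hD
      rcases List.mem_append.mp hD with hh | hh
      · exact g1 D (List.mem_append_left _ hh)
      · rcases List.mem_cons.mp hh with rfl | hh
        · exact hA.1
        · exact g1 D (List.mem_append_right _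
            (List.mem_cons_of_mem _ (List.mem_cons_of_mem _ hh)))
    · intro D hD x hx
      rcases List.mem_append.mp hD with hh | hh
      · exact g2 D (List.mem_append_left _ hh) x hx
      · rcases List.mem_cons.mp hh with rfl | hh
        · rcases (hmemA x).mp hx with hh' | hh'
          · exact g2 B hBmem x hh'
          · exact g2 C hCmem x hh'
        · exact g2 D (List.mem_append_right _
            (List.mem_cons_of_mem _ (List.mem_cons_of_mem _ hh))) x hx
    · intro a ha
      rw [hcnt a]
      exact g3 a ha
    · intro a ha b hb hp
      have := g4 a ha b hb hp
      rcases key a with ⟨h1,h2⟩|⟨h1,h2,h3⟩|⟨h1,h2,h3,h4⟩|⟨h1,h2⟩ <;>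
        rcases key b with ⟨j1,j2⟩|⟨j1,j2,j3⟩|⟨j1,j2,j3,j4⟩|⟨j1,j2⟩ <;>
        first
          | omega
          | exact absurd hp (hser a h2 b j2).1.2.1
    · intro a ha b hb hp
      have := g5 a ha b hb hp
      rcases key a with ⟨h1,h2⟩|⟨h1,h2,h3⟩|⟨h1,h2,h3,h4⟩|⟨h1,h2⟩ <;>
        rcases key b with ⟨j1,j2⟩|⟨j1,j2,j3⟩|⟨j1,j2,j3,j4⟩|⟨j1,j2⟩ <;> omega

theorem good_ctequiv {Y : Finset X} {u v : List (Finset X)}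
    (h : CTEquiv (simS prec) (serS prec sub) u v) :
    Good prec sub Y u ↔ Good prec sub Y v :=
  ctequiv_iff (fun _ _ hb => good_base hb) h

end Invariance

section Extract
variable {X : Type*} [DecidableEq X] {prec sub : X → X → Prop}

theorem good_extract :
    ∀ (u : List (Finset X)) (Y B : Finset X), Good prec sub Y u → B.Nonempty →
    (∀ b ∈ B, b ∈ Y) →
    (∀ b ∈ B, ∀ x ∈ Y, ¬ prec x b) →
    (∀ b ∈ B, ∀ x ∈ Y, sub x b → x ∈ B) →
    ∃ u', CTEquiv (simS prec) (serS prec sub) u (B :: u') ∧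
      Good prec sub (Y \ B) u' := by
  intro u
  induction u with
  | nil =>
    intro Y B hG hBne hBY hi hii
    exfalso
    obtain ⟨b, hb⟩ := hBne
    have := hG.2.2.1 b (hBY b hb)
    simp at this
  | cons A w ih =>
    intro Y B hG hBne hBY hi hii
    have hGw : Good prec sub (Y \ A) w := good_tail hG
    have hAmem : A ∈ A :: w := List.mem_cons_self
    have hAY : ∀ x ∈ A, x ∈ Y := hG.2.1 A hAmem
    have hAstep : IsStep (simS prec) A := good_isStepSeq hG A hAmem
    have hwss : IsStepSeq (simS prec) w := fun D hD =>
      good_isStepSeq hG D (List.mem_cons_of_mem _ hD)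
    have hBstep : IsStep (simS prec) B := ⟨hBne, fun a ha b hb hne =>
      ⟨hne, hi b hb a (hBY a ha), hi a ha b (hBY b hb)⟩⟩
    have F1 : ∀ y ∈ A, ∀ x ∈ Y, ¬ prec x y := by
      intro y hy x hx hp
      have := hG.2.2.2.1 x hx y (hAY y hy) hp
      rw [posFirst_cons_mem hy] at this
      omega
    have F2 : ∀ y ∈ A, ∀ x ∈ Y, sub x y → x ∈ A := by
      intro y hy x hx hsub
      have := hG.2.2.2.2 x hx y (hAY y hy) hsub
      rw [posFirst_cons_mem hy] at this
      exact mem_of_posFirst_eq_zero (Nat.le_zero.mp this)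
    -- the inductive call, when `B \ A` is nonempty
    have IH : (B \ A).Nonempty →
        ∃ w', CTEquiv (simS prec) (serS prec sub) w ((B \ A) :: w') ∧
          Good prec sub ((Y \ A) \ (B \ A)) w' := by
      intro hB2
      refine ih (Y \ A) (B \ A) hGw hB2 ?_ ?_ ?_
      · intro b hb
        rw [Finset.mem_sdiff] at hb ⊢
        exact ⟨hBY b hb.1, hb.2⟩
      · intro b hb x hx
        rw [Finset.mem_sdiff] at hb hx
        exact hi b hb.1 x hx.1
      · intro b hb x hx hsub
        rw [Finset.mem_sdiff] at hb hx ⊢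
        exact ⟨hii b hb.1 x hx.1 hsub, hx.2⟩
    by_cases hAB : A ⊆ B
    · by_cases hB2 : (B \ A).Nonempty
      · -- A ⊆ B strictly: merge A with B \ A
        obtain ⟨w', he, hGw'⟩ := IH hB2
        have hB2step : IsStep (simS prec) (B \ A) := ⟨hB2, fun a ha b hb hne =>
          hBstep.2 a (Finset.mem_sdiff.mp ha).1 b (Finset.mem_sdiff.mp hb).1 hne⟩
        have hw'ss : IsStepSeq (simS prec) w' := good_isStepSeq hGw'
        have hunion : A ∪ (B \ A) = B := Finset.union_sdiff_of_subset hAB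
        have hser : ∀ a ∈ A, ∀ c ∈ B \ A, serS prec sub a c := by
          intro a ha c hc
          rw [Finset.mem_sdiff] at hc
          refine ⟨⟨fun hh => hc.2 (hh ▸ ha), hi c hc.1 a (hAY a ha),
            hi a (hAB ha) c (hBY c hc.1)⟩, fun hsub => hc.2 (F2 a ha c (hBY c hc.1) hsub)⟩
        have e1 : CTEquiv (simS prec) (serS prec sub) (A :: w) (A :: (B \ A) :: w') :=
          ctequiv_cons hAstep he
        have e2 : CTEquiv (simS prec) (serS prec sub) (B :: w') (A :: (B \ A) :: w') := by
          have hh := ctequiv_split (ser := serS prec sub) hw'ss hAstep hB2step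
            (by rw [hunion]; exact hBstep) hser
          rwa [hunion] at hh
        refine ⟨w', ctequiv_trans e1 (ctequiv_symm e2), ?_⟩
        have hYeq : Y \ B = (Y \ A) \ (B \ A) := by
          ext x
          simp only [Finset.mem_sdiff]
          constructor
          · rintro ⟨hY, hnB⟩
            exact ⟨⟨hY, fun hA => hnB (hAB hA)⟩, fun hh => hnB hh.1⟩
          · rintro ⟨⟨hY, hnA⟩, hnBA⟩
            exact ⟨hY, fun hBx => hnBA ⟨hBx, hnA⟩⟩
        rw [hYeq]
        exact hGw'
      · -- B = A
        have hBA : B ⊆ A := Finset.sdiff_eq_empty_iff_subset.mp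
          (Finset.not_nonempty_iff_eq_empty.mp hB2)
        have hBeq : B = A := Finset.Subset.antisymm hBA hAB
        subst hBeq
        exact ⟨w, ctequiv_refl _, hGw⟩
    · obtain ⟨a2, ha2A, ha2B⟩ := Finset.not_subset.mp hAB
      have hA2step : IsStep (simS prec) (A \ B) :=
        ⟨⟨a2, Finset.mem_sdiff.mpr ⟨ha2A, ha2B⟩⟩, fun a ha b hb hne =>
          hAstep.2 a (Finset.mem_sdiff.mp ha).1 b (Finset.mem_sdiff.mp hb).1 hne⟩
      by_cases hB2 : (B \ A).Nonempty
      · obtain ⟨w', he, hGw'⟩ := IH hB2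
        have hB2step : IsStep (simS prec) (B \ A) := ⟨hB2, fun a ha b hb hne =>
          hBstep.2 a (Finset.mem_sdiff.mp ha).1 b (Finset.mem_sdiff.mp hb).1 hne⟩
        have hw'ss : IsStepSeq (simS prec) w' := good_isStepSeq hGw'
        -- serializability facts
        have ser1 : ∀ a ∈ A \ B, ∀ b ∈ B \ A, serS prec sub a b := by
          intro a ha b hb
          rw [Finset.mem_sdiff] at ha hb
          refine ⟨⟨fun hh => hb.2 (hh ▸ ha.1), hi b hb.1 a (hAY a ha.1),
            F1 a ha.1 b (hBY b hb.1)⟩, fun hsub => hb.2 (F2 a ha.1 b (hBY b hb.1) hsub)⟩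
        have ser2 : ∀ b ∈ B \ A, ∀ a ∈ A \ B, serS prec sub b a := by
          intro b hb a ha
          rw [Finset.mem_sdiff] at ha hb
          refine ⟨⟨fun hh => hb.2 (hh ▸ ha.1), F1 a ha.1 b (hBY b hb.1),
            hi b hb.1 a (hAY a ha.1)⟩, fun hsub => ha.2 (hii b hb.1 a (hAY a ha.1) hsub)⟩
        have hA2B2step : IsStep (simS prec) ((A \ B) ∪ (B \ A)) := by
          refine ⟨⟨a2, Finset.mem_union_left _ (Finset.mem_sdiff.mpr ⟨ha2A, ha2B⟩)⟩,
            fun a ha b hb hne => ?_⟩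
          rcases Finset.mem_union.mp ha with ha' | ha' <;>
            rcases Finset.mem_union.mp hb with hb' | hb'
          · exact hA2step.2 a ha' b hb' hne
          · exact (ser1 a ha' b hb').1
          · exact (ser2 a ha' b hb').1
          · exact hB2step.2 a ha' b hb' hne
        by_cases hA1 : (A ∩ B).Nonempty
        · -- general case
          have hA1step : IsStep (simS prec) (A ∩ B) := ⟨hA1, fun a ha b hb hne =>
            hAstep.2 a (Finset.mem_inter.mp ha).1 b (Finset.mem_inter.mp hb).1 hne⟩
          have hsplitA : (A ∩ B) ∪ (A \ B) = A := by
            ext x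
            simp only [Finset.mem_union, Finset.mem_inter, Finset.mem_sdiff]
            tauto
          have hsplitB : (A ∩ B) ∪ (B \ A) = B := by
            ext x
            simp only [Finset.mem_union, Finset.mem_inter, Finset.mem_sdiff]
            tauto
          have serA1A2 : ∀ a ∈ A ∩ B, ∀ c ∈ A \ B, serS prec sub a c := by
            intro a ha c hc
            rw [Finset.mem_inter] at ha
            rw [Finset.mem_sdiff] at hc
            refine ⟨hAstep.2 a ha.1 c hc.1 (fun hh => hc.2 (hh ▸ ha.2)),
              fun hsub => hc.2 (hii a ha.2 c (hAY c hc.1) hsub)⟩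
          have serA1B2 : ∀ a ∈ A ∩ B, ∀ c ∈ B \ A, serS prec sub a c := by
            intro a ha c hc
            rw [Finset.mem_inter] at ha
            rw [Finset.mem_sdiff] at hc
            refine ⟨⟨fun hh => hc.2 (hh ▸ ha.1), hi c hc.1 a (hAY a ha.1),
              hi a ha.2 c (hBY c hc.1)⟩,
              fun hsub => hc.2 (F2 a ha.1 c (hBY c hc.1) hsub)⟩
          have e1 : CTEquiv (simS prec) (serS prec sub) (A :: w)
              (A :: (B \ A) :: w') := ctequiv_cons hAstep he
          have e2 : CTEquiv (simS prec) (serS prec sub) (A :: (B \ A) :: w')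
              ((A ∩ B) :: (A \ B) :: (B \ A) :: w') := by
            have hh := ctequiv_split (ser := serS prec sub) (fun D hD => by
                rcases List.mem_cons.mp hD with rfl | hD
                · exact hB2step
                · exact hw'ss D hD)
              hA1step hA2step (by rw [hsplitA]; exact hAstep) serA1A2
            rwa [hsplitA] at hh
          have e3 : CTEquiv (simS prec) (serS prec sub)
              ((A ∩ B) :: (A \ B) :: (B \ A) :: w')
              ((A ∩ B) :: (B \ A) :: (A \ B) :: w') :=
            ctequiv_cons hA1step (ctequiv_swap hw'ss hA2step hB2step hA2B2step ser1 ser2)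
          have e4 : CTEquiv (simS prec) (serS prec sub) (B :: (A \ B) :: w')
              ((A ∩ B) :: (B \ A) :: (A \ B) :: w') := by
            have hh := ctequiv_split (ser := serS prec sub) (fun D hD => by
                rcases List.mem_cons.mp hD with rfl | hD
                · exact hA2step
                · exact hw'ss D hD)
              hA1step hB2step (by rw [hsplitB]; exact hBstep) serA1B2
            rwa [hsplitB] at hh
          have etot : CTEquiv (simS prec) (serS prec sub) (A :: w)
              (B :: (A \ B) :: w') :=
            ctequiv_trans e1 (ctequiv_trans e2 (ctequiv_trans e3 (ctequiv_symm e4)))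
          refine ⟨(A \ B) :: w', etot, ?_⟩
          exact good_tail ((good_ctequiv etot).mp hG)
        · -- A ∩ B = ∅ : disjoint, commute A and B
          have hdisj : ∀ x, x ∈ A → x ∈ B → False := by
            intro x hxA hxB
            rw [Finset.not_nonempty_iff_eq_empty] at hA1
            have hm : x ∈ A ∩ B := Finset.mem_inter.mpr ⟨hxA, hxB⟩
            rw [hA1] at hm
            simp at hm
          have hBA : B \ A = B := by
            rw [Finset.sdiff_eq_self_iff_disjoint, Finset.disjoint_left]
            intro x hxB hxA
            exact hdisj x hxA hxB
          have hABd : A \ B = A := by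
            rw [Finset.sdiff_eq_self_iff_disjoint, Finset.disjoint_left]
            intro x hxA hxB
            exact hdisj x hxA hxB
          rw [hBA] at he hB2step
          have e1 : CTEquiv (simS prec) (serS prec sub) (A :: w) (A :: B :: w') :=
            ctequiv_cons hAstep he
          have hABstep : IsStep (simS prec) (A ∪ B) := by
            have hh := hA2B2step
            rw [hABd, hBA] at hh
            exact hh
          have e2 : CTEquiv (simS prec) (serS prec sub) (A :: B :: w')
              (B :: A :: w') := by
            refine ctequiv_swap hw'ss ?_ hBstep hABstep ?_ ?_
            · rw [← hABd]; exact hA2step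
            · intro a ha b hb
              have := ser1 a (by rw [hABd]; exact ha) b (by rw [hBA]; exact hb)
              exact this
            · intro b hb a ha
              have := ser2 b (by rw [hBA]; exact hb) a (by rw [hABd]; exact ha)
              exact this
          have etot := ctequiv_trans e1 e2
          refine ⟨A :: w', etot, good_tail ((good_ctequiv etot).mp hG)⟩
      · -- B ⊆ A, A ⊄ B : split A into B and A \ B
        have hBA : B ⊆ A := Finset.sdiff_eq_empty_iff_subset.mp
          (Finset.not_nonempty_iff_eq_empty.mp hB2)
        have hunion : B ∪ (A \ B) = A := Finset.union_sdiff_of_subset hBA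
        have hser : ∀ b ∈ B, ∀ c ∈ A \ B, serS prec sub b c := by
          intro b hb c hc
          rw [Finset.mem_sdiff] at hc
          refine ⟨hAstep.2 b (hBA hb) c hc.1 (fun hh => hc.2 (hh ▸ hb)),
            fun hsub => hc.2 (hii b hb c (hAY c hc.1) hsub)⟩
        have etot : CTEquiv (simS prec) (serS prec sub) (A :: w)
            (B :: (A \ B) :: w) := by
          have hh := ctequiv_split (ser := serS prec sub) hwss hBstep hA2step
            (by rw [hunion]; exact hAstep) hser
          rwa [hunion] at hh
        refine ⟨(A \ B) :: w, etot, good_tail ((good_ctequiv etot).mp hG)⟩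

theorem good_main :
    ∀ (v u : List (Finset X)) (Y : Finset X), Good prec sub Y u → Good prec sub Y v →
    CTEquiv (simS prec) (serS prec sub) u v := by
  intro v
  induction v with
  | nil =>
    intro u Y hGu hGv
    cases u with
    | nil => exact ctequiv_refl _
    | cons A w =>
      exfalso
      obtain ⟨a, ha⟩ := hGu.1 A (List.mem_cons_self)
      have haY := hGu.2.1 A (List.mem_cons_self) a ha
      have := hGv.2.2.1 a haY
      simp at this
  | cons B v' ih =>
    intro u Y hGu hGv
    have hBmem : B ∈ B :: v' := List.mem_cons_self
    have hBne : B.Nonempty := hGv.1 B hBmem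
    have hBY : ∀ b ∈ B, b ∈ Y := hGv.2.1 B hBmem
    have hBstep : IsStep (simS prec) B := good_isStepSeq hGv B hBmem
    have hi : ∀ b ∈ B, ∀ x ∈ Y, ¬ prec x b := by
      intro b hb x hx hp
      have := hGv.2.2.2.1 x hx b (hBY b hb) hp
      rw [posFirst_cons_mem hb] at this
      omega
    have hii : ∀ b ∈ B, ∀ x ∈ Y, sub x b → x ∈ B := by
      intro b hb x hx hsub
      have := hGv.2.2.2.2 x hx b (hBY b hb) hsub
      rw [posFirst_cons_mem hb] at this
      exact mem_of_posFirst_eq_zero (Nat.le_zero.mp this)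
    obtain ⟨u', he, hGu'⟩ := good_extract u Y B hGu hBne hBY hi hii
    exact ctequiv_trans he (ctequiv_cons hBstep (ih u' (Y \ B) hGu' (good_tail hGv)))

end Extract

section Bridge
variable {X : Type*} [DecidableEq X] {prec sub : X → X → Prop}

theorem posFirst_lt_length_of_mem {u : List (Finset X)} {B : Finset X} {a : X}
    (hB : B ∈ u) (ha : a ∈ B) : posFirst u a < u.length :=
  List.findIdx_lt_length_of_exists ⟨B, hB, by simpa using ha⟩

theorem mem_get_posFirst {u : List (Finset X)} {a : X} (h : posFirst u a < u.length) :
    a ∈ u.get ⟨posFirst u a, h⟩ := by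
  have := List.findIdx_getElem (p := fun A => decide (a ∈ A)) (xs := u) (w := h)
  simp only [List.get_eq_getElem]
  exact of_decide_eq_true this

theorem posFirst_le_of_mem_get {u : List (Finset X)} {a : X} {i : Fin u.length}
    (ha : a ∈ u.get i) : posFirst u a ≤ i := by
  by_contra hlt
  push_neg at hlt
  have := List.not_of_lt_findIdx (p := fun A => decide (a ∈ A)) (xs := u) (i := i) hlt
  simp only [List.get_eq_getElem] at ha
  simp [ha] at this

theorem posFirst_unique {u : List (Finset X)} {a : X}
    (h1 : u.countP (fun A => decide (a ∈ A)) = 1) {i : Fin u.length}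
    (ha : a ∈ u.get i) : posFirst u a = i := by
  induction u with
  | nil => exact i.elim0
  | cons D t ih =>
    by_cases haD : a ∈ D
    · rw [posFirst_cons_mem haD]
      rcases i with ⟨iv, hiv⟩
      cases iv with
      | zero => rfl
      | succ k =>
        exfalso
        have hk : k < t.length := by simpa using hiv
        have hat : a ∈ t.get ⟨k, hk⟩ := by simpa using ha
        have h2 : 0 < t.countP (fun A => decide (a ∈ A)) :=
          countP_pos_of_mem (List.get_mem t ⟨k, hk⟩) hat
        rw [countP_cons_mem haD] at h1
        omega
    · rw [posFirst_cons_not_mem haD]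
      rcases i with ⟨iv, hiv⟩
      cases iv with
      | zero => exact absurd (by simpa using ha) haD
      | succ k =>
        have hk : k < t.length := by simpa using hiv
        have hat : a ∈ t.get ⟨k, hk⟩ := by simpa using ha
        rw [countP_cons_not_mem haD] at h1
        have := ih h1 hat
        simp [this]

theorem exists_unique_idx_of_countP {u : List (Finset X)} {a : X}
    (h1 : u.countP (fun A => decide (a ∈ A)) = 1) :
    ∃! i : Fin u.length, a ∈ u.get i := by
  have hpos : 0 < u.countP (fun A => decide (a ∈ A)) := by omega
  obtain ⟨B, hB, haB⟩ := List.countP_pos_iff.mp hpos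
  obtain ⟨i, hi⟩ := List.mem_iff_get.mp hB
  have haB' : a ∈ B := by simpa using haB
  refine ⟨i, show a ∈ u.get i by rw [hi]; exact haB', fun j hj => ?_⟩
  have e1 := posFirst_unique h1 hj
  have e2 := posFirst_unique h1 (i := i) (show a ∈ u.get i by rw [hi]; exact haB')
  exact Fin.ext (by omega)

theorem countP_eq_one_of_unique {u : List (Finset X)} {a : X}
    (h : ∃! i : Fin u.length, a ∈ u.get i) :
    u.countP (fun A => decide (a ∈ A)) = 1 := by
  induction u with
  | nil => exact (h.exists.choose).elim0
  | cons D t ih =>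
    obtain ⟨i, hi, huniq⟩ := h
    rcases i with ⟨iv, hiv⟩
    cases iv with
    | zero =>
      have haD : a ∈ D := by simpa using hi
      rw [countP_cons_mem haD]
      have hz : t.countP (fun A => decide (a ∈ A)) = 0 := by
        rw [List.countP_eq_zero]
        intro B hB
        obtain ⟨k, hk⟩ := List.mem_iff_get.mp hB
        simp only [decide_eq_true_eq]
        intro haB
        have hmm : a ∈ (D :: t).get ⟨k.1 + 1, by simpa using k.2⟩ := by
          simp only [List.get_eq_getElem, List.getElem_cons_succ]
          rw [show t[(k : ℕ)] = B from by simpa using hk]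
          exact haB
        have h0 := huniq _ hmm
        simp [Fin.ext_iff] at h0
      omega
    | succ k =>
      have hk : k < t.length := by simpa using hiv
      have hat : a ∈ t.get ⟨k, hk⟩ := by simpa using hi
      have haD : a ∉ D := by
        intro haD
        have hmm : a ∈ (D :: t).get ⟨0, by simp⟩ := by simpa using haD
        have h0 := huniq _ hmm
        simp [Fin.ext_iff] at h0
      rw [countP_cons_not_mem haD]
      refine ih ⟨⟨k, hk⟩, hat, fun j hj => ?_⟩
      have hmm : a ∈ (D :: t).get ⟨j.1 + 1, by simpa using j.2⟩ := by simpa using hj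
      have h2 := huniq _ hmm
      simp only [Fin.mk.injEq] at h2
      exact Fin.ext (by simp only [Fin.val_mk]; omega)

variable [Fintype X]

theorem good_of_ext {r' : X → X → Prop} {v : List (Finset X)}
    (hS : IsSOStruct prec sub) (hr' : IsStratExt prec sub r') (hv : IsOmega r' v) :
    Good prec sub Finset.univ v := by
  obtain ⟨o1, o2, o3⟩ := hv
  have hcnt : ∀ a : X, v.countP (fun A => decide (a ∈ A)) = 1 :=
    fun a => countP_eq_one_of_unique (o1 a)
  have hocc : ∀ x : X, posFirst v x < v.length := by
    intro x
    obtain ⟨B, hB, hxB⟩ := List.countP_pos_iff.mp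
      (by rw [hcnt x]; omega : 0 < v.countP (fun A => decide (x ∈ A)))
    exact posFirst_lt_length_of_mem hB (by simpa using hxB)
  have hposr : ∀ a b : X, r' a b ↔ posFirst v a < posFirst v b := by
    intro a b
    constructor
    · intro h
      obtain ⟨i, j, hij, hai, hbj⟩ := (o3 a b).mp h
      rw [posFirst_unique (hcnt a) hai, posFirst_unique (hcnt b) hbj]
      exact hij
    · intro h
      exact (o3 a b).mpr ⟨⟨posFirst v a, hocc a⟩, ⟨posFirst v b, hocc b⟩, h,
        mem_get_posFirst (hocc a), mem_get_posFirst (hocc b)⟩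
  refine ⟨?_, fun B _ a _ => Finset.mem_univ a, fun a _ => hcnt a, ?_, ?_⟩
  · intro B hB
    obtain ⟨a, ha⟩ := o2 B hB
    exact ⟨a, (ha a).mpr (Or.inl rfl)⟩
  · intro a _ b _ hp
    exact (hposr a b).mp (hr'.2.1 a b hp)
  · intro a _ b _ hp
    have h2 := (hr'.2.2 a b hp).2
    by_contra hlt
    push_neg at hlt
    exact h2 ((hposr b a).mpr hlt)

theorem ext_of_good (hS : IsSOStruct prec sub) {v : List (Finset X)}
    (hG : Good prec sub Finset.univ v) :
    ∃ r' : X → X → Prop, IsStratExt prec sub r' ∧ IsOmega r' v := by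
  obtain ⟨g1, g2, g3, g4, g5⟩ := hG
  set r' : X → X → Prop := fun a b => posFirst v a < posFirst v b with hr'def
  have hocc : ∀ a : X, posFirst v a < v.length := by
    intro a
    obtain ⟨B, hB, haB⟩ := List.countP_pos_iff.mp
      (by rw [g3 a (Finset.mem_univ a)]; omega)
    exact posFirst_lt_length_of_mem hB (by simpa using haB)
  refine ⟨r', ⟨⟨fun a => by simp [hr'def], fun a b c h1 h2 => by
      simp only [hr'def] at *; omega, ?_⟩, ?_, ?_⟩, ?_, ?_, ?_⟩
  · intro a b c h1 h2
    rcases h1 with rfl | ⟨n1, n2⟩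
    · exact h2
    · rcases h2 with rfl | ⟨n3, n4⟩
      · exact Or.inr ⟨n1, n2⟩
      · simp only [hr'def] at *
        right
        omega
  · intro a b hp
    exact g4 a (Finset.mem_univ a) b (Finset.mem_univ b) hp
  · intro a b hp
    refine ⟨fun hh => hS.1 a (hh ▸ hp), ?_⟩
    have := g5 a (Finset.mem_univ a) b (Finset.mem_univ b) hp
    simp only [hr'def]
    omega
  · intro a
    exact exists_unique_idx_of_countP (g3 a (Finset.mem_univ a))
  · intro B hB
    obtain ⟨i, hi⟩ := List.mem_iff_get.mp hB
    obtain ⟨a, haB⟩ := g1 B hB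
    have hpa : posFirst v a = i := posFirst_unique (g3 a (Finset.mem_univ a))
      (i := i) (show a ∈ v.get i by rw [hi]; exact haB)
    refine ⟨a, fun x => ?_⟩
    constructor
    · intro hx
      have hpx : posFirst v x = i := posFirst_unique (g3 x (Finset.mem_univ x))
        (i := i) (show x ∈ v.get i by rw [hi]; exact hx)
      by_cases hxa : x = a
      · exact Or.inl hxa
      · exact Or.inr ⟨by simp only [hr'def]; omega, by simp only [hr'def]; omega⟩
    · rintro (rfl | ⟨n1, n2⟩)
      · exact haB
      · simp only [hr'def] at n1 n2
        have hpx : posFirst v x = i := by omega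
        have hmem := mem_get_posFirst (hocc x)
        have : (⟨posFirst v x, hocc x⟩ : Fin v.length) = i := Fin.ext (by simpa using hpx)
        rw [this, hi] at hmem
        exact hmem
  · intro a b
    constructor
    · intro h
      exact ⟨⟨posFirst v a, hocc a⟩, ⟨posFirst v b, hocc b⟩, h,
        mem_get_posFirst (hocc a), mem_get_posFirst (hocc b)⟩
    · rintro ⟨i, j, hij, hai, hbj⟩
      have e1 := posFirst_unique (g3 a (Finset.mem_univ a)) hai
      have e2 := posFirst_unique (g3 b (Finset.mem_univ b)) hbj
      simp only [hr'def]
      omega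

end Bridge

section Rank
variable {X : Type*} [DecidableEq X] {prec sub : X → X → Prop}

/-- The canonical step sequence of a rank function. -/
def rankSeq [Fintype X] (g : X → ℕ) : List (Finset X) :=
  ((Finset.image g Finset.univ).sort (· ≤ ·)).map
    (fun n => Finset.univ.filter (fun x => g x = n))

theorem posFirst_map_filter [Fintype X] (g : X → ℕ) (l : List ℕ) (a : X) :
    posFirst (l.map (fun n => Finset.univ.filter (fun x => g x = n))) a =
      l.findIdx (fun n => decide (g a = n)) := by
  induction l with
  | nil => rfl
  | cons n t ih =>
    by_cases h : g a = n
    · rw [List.map_cons, posFirst_cons_mem (by simp [h]), List.findIdx_cons]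
      simp [h]
    · rw [List.map_cons, posFirst_cons_not_mem (by simp [h]), List.findIdx_cons, ih]
      simp [h]

theorem countP_map_filter [Fintype X] (g : X → ℕ) (l : List ℕ) (a : X) :
    (l.map (fun n => Finset.univ.filter (fun x => g x = n))).countP
        (fun A => decide (a ∈ A)) =
      l.countP (fun n => decide (g a = n)) := by
  induction l with
  | nil => rfl
  | cons n t ih =>
    rw [List.map_cons, List.countP_cons, List.countP_cons, ih]
    by_cases h : g a = n <;> simp [h]

theorem countP_eq_one_nodup {l : List ℕ} (hnd : l.Nodup) {m : ℕ} (hm : m ∈ l) :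
    l.countP (fun n => decide (m = n)) = 1 := by
  induction l with
  | nil => simp at hm
  | cons n t ih =>
    rw [List.countP_cons]
    rcases List.mem_cons.mp hm with rfl | hmt
    · have hz : t.countP (fun n => decide (m = n)) = 0 := by
        rw [List.countP_eq_zero]
        intro x hx
        simp only [decide_eq_true_eq]
        intro hmx
        exact (List.nodup_cons.mp hnd).1 (hmx ▸ hx)
      simp [hz]
    · have hne : m ≠ n := fun hh => (List.nodup_cons.mp hnd).1 (hh ▸ hmt)
      rw [ih (List.nodup_cons.mp hnd).2 hmt]
      simp [hne]

theorem sorted_findIdx_lt {l : List ℕ} (hl : l.Pairwise (· < ·)) {x y : ℕ}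
    (hx : x ∈ l) (hy : y ∈ l) :
    l.findIdx (fun n => decide (x = n)) < l.findIdx (fun n => decide (y = n)) ↔
      x < y := by
  induction l with
  | nil => simp at hx
  | cons n t ih =>
    rw [List.pairwise_cons] at hl
    rw [List.findIdx_cons, List.findIdx_cons]
    by_cases hxn : x = n
    · by_cases hyn : y = n
      · simp [hxn, hyn]
      · have hyt : y ∈ t := (List.mem_cons.mp hy).resolve_left hyn
        have := hl.1 y hyt
        simp [hxn, hyn]
        omega
    · have hxt : x ∈ t := (List.mem_cons.mp hx).resolve_left hxn
      have hnx := hl.1 x hxt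
      by_cases hyn : y = n
      · simp [hxn, hyn]
        omega
      · have hyt : y ∈ t := (List.mem_cons.mp hy).resolve_left hyn
        have hrec := ih hl.2 hxt hyt
        simp only [List.findIdx_cons, hxn, hyn, decide_false, Bool.false_eq_true, ↓reduceIte,
          cond_false]
        omega

theorem good_rankSeq [Fintype X] (g : X → ℕ)
    (hp : ∀ a b, prec a b → g a < g b) (hs : ∀ a b, sub a b → g a ≤ g b) :
    Good prec sub Finset.univ (rankSeq g) ∧
      (∀ a b : X, posFirst (rankSeq g) a < posFirst (rankSeq g) b ↔ g a < g b) := by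
  set l := (Finset.image g Finset.univ).sort (· ≤ ·) with hldef
  have hnd : l.Nodup := Finset.sort_nodup _ _
  have hsorted : l.Pairwise (· < ·) := List.sortedLT_iff_pairwise.mp (Finset.sortedLT_sort _)
  have hmem : ∀ x : X, g x ∈ l := fun x => (Finset.mem_sort _).mpr
    (Finset.mem_image.mpr ⟨x, Finset.mem_univ x, rfl⟩)
  have hposiff : ∀ a b : X, posFirst (rankSeq g) a < posFirst (rankSeq g) b ↔ g a < g b := by
    intro a b
    rw [rankSeq, posFirst_map_filter, posFirst_map_filter, ← hldef]
    exact sorted_findIdx_lt hsorted (hmem a) (hmem b)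
  refine ⟨⟨?_, fun B _ a _ => Finset.mem_univ a, ?_, ?_, ?_⟩, hposiff⟩
  · intro B hB
    rw [rankSeq, ← hldef] at hB
    obtain ⟨n, hn, rfl⟩ := List.mem_map.mp hB
    obtain ⟨x, _, hx⟩ := Finset.mem_image.mp ((Finset.mem_sort _).mp hn)
    exact ⟨x, Finset.mem_filter.mpr ⟨Finset.mem_univ x, hx⟩⟩
  · intro a _
    rw [rankSeq, ← hldef, countP_map_filter]
    exact countP_eq_one_nodup hnd (hmem a)
  · intro a _ b _ hab
    exact (hposiff a b).mpr (hp a b hab)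
  · intro a _ b _ hab
    have h1 := hs a b hab
    have h2 := hposiff b a
    omega

end Rank

section Szpilrajn
variable {X : Type*} [DecidableEq X] {prec sub : X → X → Prop}

theorem exists_g_prec [Fintype X] (hS : IsSOStruct prec sub) {a b : X}
    (hnprec : ¬ prec a b) :
    ∃ g : X → ℕ, (∀ x y, prec x y → g x < g y) ∧ (∀ x y, sub x y → g x ≤ g y) ∧
      g b ≤ g a := by
  obtain ⟨s1, s2, s3, s4⟩ := hS
  set le0 : X → X → Prop := fun x y => x = y ∨ sub x y with hle0
  have le0_trans : ∀ x y z, le0 x y → le0 y z → le0 x z := by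
    rintro x y z (rfl | h1) h2
    · exact h2
    · rcases h2 with rfl | h2
      · exact Or.inr h1
      · by_cases hxz : x = z
        · exact Or.inl hxz
        · exact Or.inr (s3 x y z h1 h2 hxz)
  have prec_le0 : ∀ x y z, prec x y → le0 y z → prec x z := by
    rintro x y z h1 (rfl | h2)
    · exact h1
    · exact s4 x y z (Or.inr ⟨h1, h2⟩)
  have le0_prec : ∀ x y z, le0 x y → prec y z → prec x z := by
    rintro x y z (rfl | h1) h2
    · exact h2
    · exact s4 x y z (Or.inl ⟨h1, h2⟩)
  set lt' : X → X → Prop := fun x y =>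
    prec x y ∨ (prec x b ∧ le0 a y) ∨ (le0 x b ∧ prec a y) with hlt'
  set le' : X → X → Prop := fun x y => le0 x y ∨ (le0 x b ∧ le0 a y) with hle'
  have hirr : ∀ x, ¬ lt' x x := by
    rintro x (h | ⟨h1, h2⟩ | ⟨h1, h2⟩)
    · exact s1 x (s2 x x h)
    · exact hnprec (le0_prec a x b h2 h1)
    · exact hnprec (prec_le0 a x b h2 h1)
  have hA : ∀ z x y, lt' z x → le' x y → lt' z y := by
    rintro z x y (h | ⟨h1, h2⟩ | ⟨h1, h2⟩) (g1 | ⟨g1, g2⟩)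
    · exact Or.inl (prec_le0 z x y h g1)
    · exact Or.inr (Or.inl ⟨prec_le0 z x b h g1, g2⟩)
    · exact Or.inr (Or.inl ⟨h1, le0_trans a x y h2 g1⟩)
    · exact Or.inr (Or.inl ⟨h1, g2⟩)
    · exact Or.inr (Or.inr ⟨h1, prec_le0 a x y h2 g1⟩)
    · exact absurd (prec_le0 a x b h2 g1) hnprec
  have hlt'le' : ∀ x y, lt' x y → le' x y := by
    rintro x y (h | ⟨h1, h2⟩ | ⟨h1, h2⟩)
    · exact Or.inl (Or.inr (s2 x y h))
    · exact Or.inr ⟨Or.inr (s2 x b h1), h2⟩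
    · exact Or.inr ⟨h1, Or.inr (s2 a y h2)⟩
  refine ⟨fun x => Set.ncard {z | lt' z x}, ?_, ?_, ?_⟩
  · intro x y hxy
    have hlt : lt' x y := Or.inl hxy
    refine Set.ncard_lt_ncard ⟨fun z hz => hA z x y hz (hlt'le' x y hlt), ?_⟩
      (Set.toFinite _)
    intro hsub'
    exact hirr x (hsub' hlt)
  · intro x y hxy
    exact Set.ncard_le_ncard (fun z hz => hA z x y hz (Or.inl (Or.inr hxy)))
      (Set.toFinite _)
  · exact Set.ncard_le_ncard
      (fun z hz => hA z b a hz (Or.inr ⟨Or.inl rfl, Or.inl rfl⟩)) (Set.toFinite _)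

theorem exists_g_sub [Fintype X] (hS : IsSOStruct prec sub) {a b : X}
    (hne : a ≠ b) (hnsub : ¬ sub a b) :
    ∃ g : X → ℕ, (∀ x y, prec x y → g x < g y) ∧ (∀ x y, sub x y → g x ≤ g y) ∧
      g b < g a := by
  obtain ⟨s1, s2, s3, s4⟩ := hS
  set le0 : X → X → Prop := fun x y => x = y ∨ sub x y with hle0
  have hnle0 : ¬ le0 a b := by
    rintro (rfl | h)
    · exact hne rfl
    · exact hnsub h
  have le0_trans : ∀ x y z, le0 x y → le0 y z → le0 x z := by
    rintro x y z (rfl | h1) h2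
    · exact h2
    · rcases h2 with rfl | h2
      · exact Or.inr h1
      · by_cases hxz : x = z
        · exact Or.inl hxz
        · exact Or.inr (s3 x y z h1 h2 hxz)
  have prec_le0 : ∀ x y z, prec x y → le0 y z → prec x z := by
    rintro x y z h1 (rfl | h2)
    · exact h1
    · exact s4 x y z (Or.inr ⟨h1, h2⟩)
  set lt' : X → X → Prop := fun x y => prec x y ∨ (le0 x b ∧ le0 a y) with hlt'
  set le' : X → X → Prop := fun x y => le0 x y ∨ (le0 x b ∧ le0 a y) with hle'
  have hirr : ∀ x, ¬ lt' x x := by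
    rintro x (h | ⟨h1, h2⟩)
    · exact s1 x (s2 x x h)
    · exact hnle0 (le0_trans a x b h2 h1)
  have hA : ∀ z x y, lt' z x → le' x y → lt' z y := by
    rintro z x y (h | ⟨h1, h2⟩) (g1 | ⟨g1, g2⟩)
    · exact Or.inl (prec_le0 z x y h g1)
    · exact Or.inr ⟨Or.inr (s2 z b (prec_le0 z x b h g1)), g2⟩
    · exact Or.inr ⟨h1, le0_trans a x y h2 g1⟩
    · exact absurd (le0_trans a x b h2 g1) hnle0
  have hlt'le' : ∀ x y, lt' x y → le' x y := by
    rintro x y (h | ⟨h1, h2⟩)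
    · exact Or.inl (Or.inr (s2 x y h))
    · exact Or.inr ⟨h1, h2⟩
  refine ⟨fun x => Set.ncard {z | lt' z x}, ?_, ?_, ?_⟩
  · intro x y hxy
    have hlt : lt' x y := Or.inl hxy
    refine Set.ncard_lt_ncard ⟨fun z hz => hA z x y hz (hlt'le' x y hlt), ?_⟩
      (Set.toFinite _)
    intro hsub'
    exact hirr x (hsub' hlt)
  · intro x y hxy
    exact Set.ncard_le_ncard (fun z hz => hA z x y hz (Or.inl (Or.inr hxy)))
      (Set.toFinite _)
  · have hlt : lt' b a := Or.inr ⟨Or.inl rfl, Or.inl rfl⟩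
    refine Set.ncard_lt_ncard ⟨fun z hz => hA z b a hz (hlt'le' b a hlt), ?_⟩
      (Set.toFinite _)
    intro hsub'
    exact hirr b (hsub' hlt)

end Szpilrajn

/-- The comtrace generated by a finite so-structure: the step sequences of the
stratified extensions of `(X, prec, sub)` form exactly the comtrace congruence class of
`Ω_⊲` over the alphabet `(X, sim_S, ser_S)`, and the so-structure defined by this
comtrace is `(X, prec, sub)` itself. -/
theorem stmt16 {X : Type*} [DecidableEq X] [Fintype X]
    (prec sub : X → X → Prop) (hS : IsSOStruct prec sub)
    (r : X → X → Prop) (hr : IsStratExt prec sub r)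
    (Om : List (Finset X)) (hOm : IsOmega r Om) :
    (∀ v : List (Finset X),
      (∃ r' : X → X → Prop, IsStratExt prec sub r' ∧ IsOmega r' v) ↔
        CTEquiv (simS prec) (serS prec sub) Om v) ∧
    (∀ a b : X,
      ((∀ x : List (Finset X), CTEquiv (simS prec) (serS prec sub) Om x →
          posFirst x a < posFirst x b) ↔ prec a b) ∧
      ((∀ x : List (Finset X), CTEquiv (simS prec) (serS prec sub) Om x →
          (a ≠ b ∧ posFirst x a ≤ posFirst x b)) ↔ sub a b)) := by
  have hGOm : Good prec sub Finset.univ Om := good_of_ext hS hr hOm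
  refine ⟨?_, ?_⟩
  · intro v
    constructor
    · rintro ⟨r', hr', hv⟩
      exact good_main v Om Finset.univ hGOm (good_of_ext hS hr' hv)
    · intro h
      exact ext_of_good hS ((good_ctequiv h).mp hGOm)
  · intro a b
    constructor
    · constructor
      · intro h
        by_contra hnp
        obtain ⟨g, hg1, hg2, hg3⟩ := exists_g_prec hS hnp
        obtain ⟨hGood, hiff⟩ := good_rankSeq g hg1 hg2
        have hcte : CTEquiv (simS prec) (serS prec sub) Om (rankSeq g) :=
          good_main _ Om _ hGOm hGood
        have h2 := h _ hcte
        have h3 := (hiff a b).mp h2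
        omega
      · intro hp x hx
        have hGx := (good_ctequiv hx).mp hGOm
        exact hGx.2.2.2.1 a (Finset.mem_univ a) b (Finset.mem_univ b) hp
    · constructor
      · intro h
        have hne : a ≠ b := (h Om (ctequiv_refl _)).1
        by_contra hns
        obtain ⟨g, hg1, hg2, hg3⟩ := exists_g_sub hS hne hns
        obtain ⟨hGood, hiff⟩ := good_rankSeq g hg1 hg2
        have hcte : CTEquiv (simS prec) (serS prec sub) Om (rankSeq g) :=
          good_main _ Om _ hGOm hGood
        have h2 := (h _ hcte).2
        have h3 := (hiff b a).mpr hg3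
        omega
      · intro hs x hx
        have hGx := (good_ctequiv hx).mp hGOm
        exact ⟨fun hh => hS.1 a (hh ▸ hs),
          hGx.2.2.2.2 a (Finset.mem_univ a) b (Finset.mem_univ b) hs⟩
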